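/- For a triangle T in ℂ with vertices a = -1, b = 1, and c = x + iy, whose diameter (longest side) is the side ab of length 2, the width of T equals |y| (the length of the height drawn to the side ab). -/

import Mathlib

open Complex

/-- The width of a planar set: the minimum over directions `γ` of the length of the
projection of `K` onto the direction `e^{iγ}`. -/
noncomputable def setWidth (K : Set ℂ) : ℝ :=
  ⨅ γ : ℝ, (sSup ((fun z : ℂ => (z * Complex.exp (γ * Complex.I)).re) '' K) -
    sInf ((fun z : ℂ => (z * Complex.exp (γ * Complex.I)).re) '' K))

private lemma proj_re (γ : ℝ) (z : ℂ) :
    (z * Complex.exp (γ * Complex.I)).re = z.re * Real.cos γ - z.im * Real.sin γ := by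
  rw [Complex.exp_mul_I]
  simp [Complex.mul_re, Complex.add_re, Complex.cos_ofReal_re, Complex.sin_ofReal_re,
    Complex.cos_ofReal_im, Complex.sin_ofReal_im]

private lemma isLinearMap_proj (γ : ℝ) :
    IsLinearMap ℝ (fun z : ℂ => (z * Complex.exp (γ * Complex.I)).re) := by
  constructor
  · intro a b; simp [add_mul]
  · intro m a
    simp only [smul_mul_assoc, Complex.smul_re, smul_eq_mul]

private lemma sSup_proj {f : ℂ → ℝ} (hf : IsLinearMap ℝ f) (a b c : ℂ) :
    sSup (f '' convexHull ℝ {a, b, c}) = max (max (f a) (f b)) (f c) := by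
  set M := max (max (f a) (f b)) (f c) with hM
  have hsub : convexHull ℝ ({a, b, c} : Set ℂ) ⊆ {z | f z ≤ M} := by
    apply convexHull_min _ (convex_halfSpace_le hf M)
    rintro z hz
    simp only [Set.mem_insert_iff, Set.mem_singleton_iff] at hz
    rcases hz with rfl | rfl | rfl
    · exact Set.mem_setOf_eq ▸ le_max_of_le_left (le_max_left _ _)
    · exact Set.mem_setOf_eq ▸ le_max_of_le_left (le_max_right _ _)
    · exact Set.mem_setOf_eq ▸ le_max_right _ _
  have ha : a ∈ convexHull ℝ ({a, b, c} : Set ℂ) := subset_convexHull ℝ _ (by simp)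
  have hb : b ∈ convexHull ℝ ({a, b, c} : Set ℂ) := subset_convexHull ℝ _ (by simp)
  have hc : c ∈ convexHull ℝ ({a, b, c} : Set ℂ) := subset_convexHull ℝ _ (by simp)
  have hbdd : BddAbove (f '' convexHull ℝ ({a, b, c} : Set ℂ)) :=
    ⟨M, by rintro _ ⟨z, hz, rfl⟩; exact hsub hz⟩
  apply le_antisymm
  · exact csSup_le ⟨f a, ⟨a, ha, rfl⟩⟩ (by rintro _ ⟨z, hz, rfl⟩; exact hsub hz)
  · have hmem : M ∈ f '' convexHull ℝ ({a, b, c} : Set ℂ) := by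
      rcases max_choice (max (f a) (f b)) (f c) with h | h
      · rcases max_choice (f a) (f b) with h' | h'
        · exact ⟨a, ha, by rw [hM, h, h']⟩
        · exact ⟨b, hb, by rw [hM, h, h']⟩
      · exact ⟨c, hc, by rw [hM, h]⟩
    exact le_csSup hbdd hmem

private lemma sInf_proj {f : ℂ → ℝ} (hf : IsLinearMap ℝ f) (a b c : ℂ) :
    sInf (f '' convexHull ℝ {a, b, c}) = min (min (f a) (f b)) (f c) := by
  set M := min (min (f a) (f b)) (f c) with hM
  have hsub : convexHull ℝ ({a, b, c} : Set ℂ) ⊆ {z | M ≤ f z} := by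
    apply convexHull_min _ (convex_halfSpace_ge hf M)
    rintro z hz
    simp only [Set.mem_insert_iff, Set.mem_singleton_iff] at hz
    rcases hz with rfl | rfl | rfl
    · exact Set.mem_setOf_eq ▸ min_le_of_left_le (min_le_left _ _)
    · exact Set.mem_setOf_eq ▸ min_le_of_left_le (min_le_right _ _)
    · exact Set.mem_setOf_eq ▸ min_le_right _ _
  have ha : a ∈ convexHull ℝ ({a, b, c} : Set ℂ) := subset_convexHull ℝ _ (by simp)
  have hb : b ∈ convexHull ℝ ({a, b, c} : Set ℂ) := subset_convexHull ℝ _ (by simp)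
  have hc : c ∈ convexHull ℝ ({a, b, c} : Set ℂ) := subset_convexHull ℝ _ (by simp)
  have hbdd : BddBelow (f '' convexHull ℝ ({a, b, c} : Set ℂ)) :=
    ⟨M, by rintro _ ⟨z, hz, rfl⟩; exact hsub hz⟩
  apply le_antisymm
  · have hmem : M ∈ f '' convexHull ℝ ({a, b, c} : Set ℂ) := by
      rcases min_choice (min (f a) (f b)) (f c) with h | h
      · rcases min_choice (f a) (f b) with h' | h'
        · exact ⟨a, ha, by rw [hM, h, h']⟩
        · exact ⟨b, hb, by rw [hM, h, h']⟩
      · exact ⟨c, hc, by rw [hM, h]⟩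
    exact csInf_le hbdd hmem
  · exact le_csInf ⟨f a, ⟨a, ha, rfl⟩⟩ (by rintro _ ⟨z, hz, rfl⟩; exact hsub hz)

set_option maxHeartbeats 1000000 in
private lemma core2 (p1 p2 p3 q1 q2 q3 y : ℝ)
    (hE : p1*q2 - p2*q1 + q3*(p2-p1) + p3*(q1-q2) = 2*y)
    (e12 : (p2-p1)^2 + (q2-q1)^2 ≤ 4)
    (e13 : (p3-p1)^2 + (q3-q1)^2 ≤ 4)
    (e23 : (p3-p2)^2 + (q3-q2)^2 ≤ 4) :
    y ≤ max (max p1 p2) p3 - min (min p1 p2) p3 := by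
  have hq12a : q2 - q1 ≤ 2 := by nlinarith [sq_nonneg (p2 - p1)]
  have hq12b : -2 ≤ q2 - q1 := by nlinarith [sq_nonneg (p2 - p1)]
  have hq13a : q3 - q1 ≤ 2 := by nlinarith [sq_nonneg (p3 - p1)]
  have hq13b : -2 ≤ q3 - q1 := by nlinarith [sq_nonneg (p3 - p1)]
  have hq23a : q3 - q2 ≤ 2 := by nlinarith [sq_nonneg (p3 - p2)]
  have hq23b : -2 ≤ q3 - q2 := by nlinarith [sq_nonneg (p3 - p2)]
  rcases le_total p1 p2 with h12 | h12
  · rcases le_total p3 p1 with h31 | h31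
    · -- ordering p3 ≤ p1 ≤ p2 : lo = 3, hi = 2, mid = 1
      have hD : p2 - p3 ≤ max (max p1 p2) p3 - min (min p1 p2) p3 :=
        sub_le_sub (le_max_of_le_left (le_max_right _ _)) (min_le_right _ _)
      have hA := mul_nonneg (by linarith : (0:ℝ) ≤ p1 - p3) (by linarith : (0:ℝ) ≤ 2 - (q1 - q2))
      have hB := mul_nonneg (by linarith : (0:ℝ) ≤ p1 - p3) (by linarith : (0:ℝ) ≤ 2 + (q1 - q2))
      have hC := mul_nonneg (by linarith : (0:ℝ) ≤ p2 - p1) (by linarith : (0:ℝ) ≤ 2 - (q1 - q3))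
      have hX := mul_nonneg (by linarith : (0:ℝ) ≤ p2 - p1) (by linarith : (0:ℝ) ≤ 2 + (q1 - q3))
      nlinarith [hE, hD, hA, hB, hC, hX]
    · rcases le_total p3 p2 with h32 | h32
      · -- ordering p1 ≤ p3 ≤ p2 : lo = 1, hi = 2, mid = 3
        have hD : p2 - p1 ≤ max (max p1 p2) p3 - min (min p1 p2) p3 :=
          sub_le_sub (le_max_of_le_left (le_max_right _ _))
            (min_le_of_left_le (min_le_left _ _))
        have hA := mul_nonneg (by linarith : (0:ℝ) ≤ p3 - p1) (by linarith : (0:ℝ) ≤ 2 - (q3 - q2))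
        have hB := mul_nonneg (by linarith : (0:ℝ) ≤ p3 - p1) (by linarith : (0:ℝ) ≤ 2 + (q3 - q2))
        have hC := mul_nonneg (by linarith : (0:ℝ) ≤ p2 - p3) (by linarith : (0:ℝ) ≤ 2 - (q3 - q1))
        have hX := mul_nonneg (by linarith : (0:ℝ) ≤ p2 - p3) (by linarith : (0:ℝ) ≤ 2 + (q3 - q1))
        nlinarith [hE, hD, hA, hB, hC, hX]
      · -- ordering p1 ≤ p2 ≤ p3 : lo = 1, hi = 3, mid = 2
        have hD : p3 - p1 ≤ max (max p1 p2) p3 - min (min p1 p2) p3 :=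
          sub_le_sub (le_max_right _ _) (min_le_of_left_le (min_le_left _ _))
        have hA := mul_nonneg (by linarith : (0:ℝ) ≤ p2 - p1) (by linarith : (0:ℝ) ≤ 2 - (q2 - q3))
        have hB := mul_nonneg (by linarith : (0:ℝ) ≤ p2 - p1) (by linarith : (0:ℝ) ≤ 2 + (q2 - q3))
        have hC := mul_nonneg (by linarith : (0:ℝ) ≤ p3 - p2) (by linarith : (0:ℝ) ≤ 2 - (q2 - q1))
        have hX := mul_nonneg (by linarith : (0:ℝ) ≤ p3 - p2) (by linarith : (0:ℝ) ≤ 2 + (q2 - q1))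
        nlinarith [hE, hD, hA, hB, hC, hX]
  · rcases le_total p3 p2 with h32 | h32
    · -- ordering p3 ≤ p2 ≤ p1 : lo = 3, hi = 1, mid = 2
      have hD : p1 - p3 ≤ max (max p1 p2) p3 - min (min p1 p2) p3 :=
        sub_le_sub (le_max_of_le_left (le_max_left _ _)) (min_le_right _ _)
      have hA := mul_nonneg (by linarith : (0:ℝ) ≤ p2 - p3) (by linarith : (0:ℝ) ≤ 2 - (q2 - q1))
      have hB := mul_nonneg (by linarith : (0:ℝ) ≤ p2 - p3) (by linarith : (0:ℝ) ≤ 2 + (q2 - q1))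
      have hC := mul_nonneg (by linarith : (0:ℝ) ≤ p1 - p2) (by linarith : (0:ℝ) ≤ 2 - (q2 - q3))
      have hX := mul_nonneg (by linarith : (0:ℝ) ≤ p1 - p2) (by linarith : (0:ℝ) ≤ 2 + (q2 - q3))
      nlinarith [hE, hD, hA, hB, hC, hX]
    · rcases le_total p3 p1 with h31 | h31
      · -- ordering p2 ≤ p3 ≤ p1 : lo = 2, hi = 1, mid = 3
        have hD : p1 - p2 ≤ max (max p1 p2) p3 - min (min p1 p2) p3 :=
          sub_le_sub (le_max_of_le_left (le_max_left _ _))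
            (min_le_of_left_le (min_le_right _ _))
        have hA := mul_nonneg (by linarith : (0:ℝ) ≤ p3 - p2) (by linarith : (0:ℝ) ≤ 2 - (q3 - q1))
        have hB := mul_nonneg (by linarith : (0:ℝ) ≤ p3 - p2) (by linarith : (0:ℝ) ≤ 2 + (q3 - q1))
        have hC := mul_nonneg (by linarith : (0:ℝ) ≤ p1 - p3) (by linarith : (0:ℝ) ≤ 2 - (q3 - q2))
        have hX := mul_nonneg (by linarith : (0:ℝ) ≤ p1 - p3) (by linarith : (0:ℝ) ≤ 2 + (q3 - q2))
        nlinarith [hE, hD, hA, hB, hC, hX]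
      · -- ordering p2 ≤ p1 ≤ p3 : lo = 2, hi = 3, mid = 1
        have hD : p3 - p2 ≤ max (max p1 p2) p3 - min (min p1 p2) p3 :=
          sub_le_sub (le_max_right _ _) (min_le_of_left_le (min_le_right _ _))
        have hA := mul_nonneg (by linarith : (0:ℝ) ≤ p1 - p2) (by linarith : (0:ℝ) ≤ 2 - (q1 - q3))
        have hB := mul_nonneg (by linarith : (0:ℝ) ≤ p1 - p2) (by linarith : (0:ℝ) ≤ 2 + (q1 - q3))
        have hC := mul_nonneg (by linarith : (0:ℝ) ≤ p3 - p1) (by linarith : (0:ℝ) ≤ 2 - (q1 - q2))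
        have hX := mul_nonneg (by linarith : (0:ℝ) ≤ p3 - p1) (by linarith : (0:ℝ) ≤ 2 + (q1 - q2))
        nlinarith [hE, hD, hA, hB, hC, hX]

private lemma core (x y k s : ℝ) (hks : k^2 + s^2 = 1)
    (h1 : (x+1)^2 + y^2 ≤ 4) (h2 : (x-1)^2 + y^2 ≤ 4) :
    y ≤ max (max (-k) k) (x*k - y*s) - min (min (-k) k) (x*k - y*s) := by
  apply core2 (-k) k (x*k - y*s) (-s) s (x*s + y*k) y
  · linear_combination 2*y*hks
  · have : (k - -k)^2 + (s - -s)^2 = 4 := by linear_combination 4*hks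
    linarith
  · have : (x*k - y*s - -k)^2 + (x*s + y*k - -s)^2 = (x+1)^2 + y^2 := by
      linear_combination ((x+1)^2 + y^2) * hks
    linarith
  · have : (x*k - y*s - k)^2 + (x*s + y*k - s)^2 = (x-1)^2 + y^2 := by
      linear_combination ((x-1)^2 + y^2) * hks
    linarith

/-- For the triangle `T` with vertices `-1`, `1`, `c = x + iy` (`y ≠ 0`), whose longest
side is the side from `-1` to `1` of length `2`, the width of `T` equals `|y|`. -/
theorem stmt_5 (c : ℂ) (hy : c.im ≠ 0)
    (h1 : ‖c - (-1)‖ ≤ 2) (h2 : ‖c - 1‖ ≤ 2)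
    (T : Set ℂ) (hT : T = convexHull ℝ {-1, 1, c}) :
    setWidth T = |c.im| := by
  have hsq1 : (c.re + 1)^2 + c.im^2 ≤ 4 := by
    have h := pow_le_pow_left₀ (norm_nonneg _) h1 2
    rw [Complex.sq_norm] at h
    simp [Complex.normSq_apply] at h
    nlinarith [h]
  have hsq2 : (c.re - 1)^2 + c.im^2 ≤ 4 := by
    have h := pow_le_pow_left₀ (norm_nonneg _) h2 2
    rw [Complex.sq_norm] at h
    simp [Complex.normSq_apply] at h
    nlinarith [h]
  subst hT
  have hFval : ∀ γ : ℝ,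
      sSup ((fun z : ℂ => (z * Complex.exp (γ * Complex.I)).re) '' convexHull ℝ {-1, 1, c}) -
        sInf ((fun z : ℂ => (z * Complex.exp (γ * Complex.I)).re) '' convexHull ℝ {-1, 1, c}) =
      max (max (-Real.cos γ) (Real.cos γ)) (c.re * Real.cos γ - c.im * Real.sin γ) -
        min (min (-Real.cos γ) (Real.cos γ)) (c.re * Real.cos γ - c.im * Real.sin γ) := by
    intro γ
    rw [sSup_proj (isLinearMap_proj γ), sInf_proj (isLinearMap_proj γ),
      proj_re, proj_re, proj_re]
    norm_num
  have key : ∀ γ : ℝ,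
      |c.im| ≤ sSup ((fun z : ℂ => (z * Complex.exp (γ * Complex.I)).re) '' convexHull ℝ {-1, 1, c}) -
        sInf ((fun z : ℂ => (z * Complex.exp (γ * Complex.I)).re) '' convexHull ℝ {-1, 1, c}) := by
    intro γ
    rw [hFval γ]
    have hks : Real.cos γ ^ 2 + Real.sin γ ^ 2 = 1 := by
      rw [add_comm]; exact Real.sin_sq_add_cos_sq γ
    rcases abs_cases c.im with ⟨habs, _⟩ | ⟨habs, _⟩
    · rw [habs]; exact core c.re c.im _ _ hks hsq1 hsq2
    · rw [habs]
      have h := core c.re (-c.im) (Real.cos γ) (-Real.sin γ)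
        (by rw [neg_sq]; exact hks) (by rw [neg_sq]; exact hsq1) (by rw [neg_sq]; exact hsq2)
      have he : c.re * Real.cos γ - (-c.im) * (-Real.sin γ)
          = c.re * Real.cos γ - c.im * Real.sin γ := by ring
      rw [he] at h
      exact h
  rw [setWidth]
  have hbdd : BddBelow (Set.range fun γ : ℝ =>
      sSup ((fun z : ℂ => (z * Complex.exp (γ * Complex.I)).re) '' convexHull ℝ {-1, 1, c}) -
        sInf ((fun z : ℂ => (z * Complex.exp (γ * Complex.I)).re) '' convexHull ℝ {-1, 1, c})) :=
    ⟨|c.im|, by rintro _ ⟨γ, rfl⟩; exact key γ⟩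
  apply le_antisymm
  · have hval : sSup ((fun z : ℂ => (z * Complex.exp ((Real.pi/2 : ℝ) * Complex.I)).re) ''
          convexHull ℝ {-1, 1, c}) -
        sInf ((fun z : ℂ => (z * Complex.exp ((Real.pi/2 : ℝ) * Complex.I)).re) ''
          convexHull ℝ {-1, 1, c}) = |c.im| := by
      rw [hFval (Real.pi/2)]
      simp [Real.cos_pi_div_two, Real.sin_pi_div_two]
      rw [max_sub_min_eq_abs]
      simp
    calc (⨅ γ : ℝ, (sSup ((fun z : ℂ => (z * Complex.exp (γ * Complex.I)).re) '' convexHull ℝ {-1, 1, c}) -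
          sInf ((fun z : ℂ => (z * Complex.exp (γ * Complex.I)).re) '' convexHull ℝ {-1, 1, c})))
        ≤ _ := ciInf_le hbdd (Real.pi/2)
      _ = |c.im| := hval
  · exact le_ciInf key
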